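/- Let G be a torsion-free finitely generated residually finite group and φ an automorphism of G. If φ has a nontrivial fixed point (some g ≠ e with φ(g) = g), then R(φ) = ∞. -/

import Mathlib

/-- A group is residually finite if every nontrivial element survives in some
finite quotient (equivalently, avoids some finite-index normal subgroup). -/
def IsResiduallyFinite (G : Type*) [Group G] : Prop :=
  ∀ g : G, g ≠ 1 → ∃ H : Subgroup G, H.Normal ∧ H.FiniteIndex ∧ g ∉ H

/-- The setoid of `φ`-twisted conjugacy: `g ~ h` iff `h = x * g * φ(x)⁻¹` for some `x`. -/
def twistedConjSetoid {G : Type*} [Group G] (φ : G ≃* G) : Setoid G where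
  r g h := ∃ x : G, h = x * g * (φ x)⁻¹
  iseqv := by
    refine ⟨fun g => ⟨1, by simp⟩, ?_, ?_⟩
    · rintro g h ⟨x, rfl⟩
      exact ⟨x⁻¹, by simp [mul_assoc]⟩
    · rintro a b c ⟨x, rfl⟩ ⟨y, rfl⟩
      exact ⟨y * x, by simp [map_mul, mul_assoc]⟩

lemma finite_monoidHom (G P : Type*) [Group G] [Group.FG G] [Monoid P] [Finite P] :
    Finite (G →* P) := by
  obtain ⟨S, hS, hSfin⟩ := Group.fg_iff.mp ‹Group.FG G›
  haveI : Finite S := hSfin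
  have hinj : Function.Injective (fun f : G →* P => (fun s : S => f s)) := by
    intro f g h
    exact MonoidHom.eq_of_eqOn_dense hS (fun x hx => congrFun h ⟨x, hx⟩)
  exact Finite.of_injective _ hinj

lemma finite_index_subgroups (G : Type*) [Group G] [Group.FG G] (n : ℕ) (hn : 0 < n) :
    {H : Subgroup G | H.index = n}.Finite := by
  classical
  haveI : Finite (G →* Equiv.Perm (Fin n)) := finite_monoidHom _ _
  have key : ∀ H : {H : Subgroup G | H.index = n},
      ∃ p : (G →* Equiv.Perm (Fin n)) × Fin n, ∀ x : G, x ∈ H.1 ↔ p.1 x p.2 = p.2 := by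
    rintro ⟨H, hH⟩
    haveI : Finite (G ⧸ H) := by
      have h0 : Nat.card (G ⧸ H) ≠ 0 := by
        have : H.index = n := hH
        rw [Subgroup.index] at this; omega
      exact (Nat.card_ne_zero.mp h0).2
    haveI : Fintype (G ⧸ H) := Fintype.ofFinite _
    have hcard : Fintype.card (G ⧸ H) = n := by
      rw [← Nat.card_eq_fintype_card]; exact hH
    obtain ⟨e⟩ := Fintype.truncEquivFinOfCardEq hcard
    set ρ := MulAction.toPermHom G (G ⧸ H) with hρ
    have smul_one : ∀ x : G, ρ x (((1:G) : G ⧸ H)) = ((x : G) : G ⧸ H) := by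
      intro x
      show x • (((1:G) : G ⧸ H)) = _
      rw [MulAction.Quotient.smul_mk]; simp
    refine ⟨⟨MonoidHom.mk' (fun x => Equiv.permCongr e (ρ x)) ?_, e ((1 : G) : G ⧸ H)⟩, ?_⟩
    · intro a b
      ext i
      simp [Equiv.permCongr_apply, map_mul]
    · intro x
      simp only [MonoidHom.mk'_apply, Equiv.permCongr_apply, Equiv.symm_apply_apply]
      rw [smul_one, e.apply_eq_iff_eq]
      rw [QuotientGroup.eq]
      simp
  choose F hF using key
  have hinj : Function.Injective F := by
    intro H₁ H₂ h
    ext x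
    rw [hF H₁ x, hF H₂ x, h]
  have : Finite {H : Subgroup G | H.index = n} := Finite.of_injective F hinj
  exact this


lemma exists_invariant {G : Type*} [Group G] [Group.FG G] (hrf : IsResiduallyFinite G)
    (φ : G ≃* G) (a : G) (ha : a ≠ 1) :
    ∃ M : Subgroup G, M.Normal ∧ M.FiniteIndex ∧ a ∉ M ∧ ∀ x : G, x ∈ M ↔ φ x ∈ M := by
  classical
  obtain ⟨N, hNnorm, hNfi, hNa⟩ := hrf a ha
  set n := N.index with hn
  have hn0 : 0 < n := Nat.pos_of_ne_zero hNfi.index_ne_zero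
  set 𝒮 : Set (Subgroup G) := {K : Subgroup G | K.Normal ∧ K.index = n} with h𝒮
  have h𝒮fin : 𝒮.Finite := (finite_index_subgroups G n hn0).subset (fun K hK => hK.2)
  haveI : Finite ↥𝒮 := h𝒮fin
  set M : Subgroup G := ⨅ K : ↥𝒮, K.1 with hM
  have hmem : ∀ x : G, x ∈ M ↔ ∀ K : ↥𝒮, x ∈ K.1 := by
    intro x; rw [hM]; exact Subgroup.mem_iInf
  have hcomap : ∀ (ψ : G ≃* G), ∀ K ∈ 𝒮, Subgroup.comap (ψ : G →* G) K ∈ 𝒮 := by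
    rintro ψ K ⟨hKn, hKi⟩
    refine ⟨Subgroup.Normal.comap hKn _, ?_⟩
    rw [Subgroup.index_comap_of_surjective _ ψ.surjective]
    exact hKi
  refine ⟨M, ?_, ?_, ?_, ?_⟩
  · constructor
    intro x hx gg
    rw [hmem] at hx ⊢
    intro K
    exact K.2.1.conj_mem x (hx K) gg
  · exact Subgroup.finiteIndex_iInf fun K => ⟨(K.2.2 ▸ hNfi.index_ne_zero : K.1.index ≠ 0)⟩
  · intro hM'
    exact hNa ((hmem a).mp hM' ⟨N, hNnorm, hn.symm⟩)
  · intro x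
    constructor
    · intro hx
      rw [hmem] at hx ⊢
      intro K
      have := hx ⟨Subgroup.comap (φ : G →* G) K.1, hcomap φ K.1 K.2⟩
      exact this
    · intro hx
      rw [hmem] at hx ⊢
      intro K
      have := hx ⟨Subgroup.comap (φ.symm : G →* G) K.1, hcomap φ.symm K.1 K.2⟩
      simpa using this

lemma order_char {G : Type*} [Group G] (M : Subgroup G) [M.Normal] [M.FiniteIndex] (g : G) :
    0 < orderOf (QuotientGroup.mk g : G ⧸ M) ∧
      ∀ j : ℕ, g ^ j ∈ M ↔ orderOf (QuotientGroup.mk g : G ⧸ M) ∣ j := by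
  haveI : Finite (G ⧸ M) := (Subgroup.finite_quotient_of_finiteIndex : Finite (G ⧸ M))
  constructor
  · exact orderOf_pos _
  · intro j
    rw [orderOf_dvd_iff_pow_eq_one, ← QuotientGroup.mk_pow]
    exact (QuotientGroup.eq_one_iff _).symm

lemma exists_chain {G : Type*} [Group G] [Group.FG G] (hrf : IsResiduallyFinite G)
    (htf : ∀ g : G, g ≠ 1 → ¬IsOfFinOrder g) (φ : G ≃* G) (g : G) (hg : g ≠ 1) (k : ℕ) :
    ∃ (M : Subgroup G) (d : ℕ), M.Normal ∧ M.FiniteIndex ∧ (∀ x : G, x ∈ M ↔ φ x ∈ M) ∧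
      0 < d ∧ (∀ j : ℕ, g ^ j ∈ M ↔ d ∣ j) ∧
      ∃ s : Finset ℕ, s.card = k + 1 ∧ ∀ m ∈ s, m ∣ d := by
  classical
  induction k with
  | zero =>
      obtain ⟨M, hMn, hMf, -, hMinv⟩ := exists_invariant hrf φ g hg
      haveI := hMn; haveI := hMf
      obtain ⟨hd0, hdchar⟩ := order_char M g
      exact ⟨M, _, hMn, hMf, hMinv, hd0, hdchar, {orderOf (QuotientGroup.mk g : G ⧸ M)},
        by simp, by simp⟩
  | succ k ih =>
      obtain ⟨M, d, hMn, hMf, hMinv, hd0, hdchar, s, hscard, hsdvd⟩ := ih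
      have hgd : g ^ d ≠ 1 := by
        intro h
        exact htf g hg (isOfFinOrder_iff_pow_eq_one.mpr ⟨d, hd0, h⟩)
      obtain ⟨M', hM'n, hM'f, hM'a, hM'inv⟩ := exists_invariant hrf φ (g ^ d) hgd
      set M'' : Subgroup G := M ⊓ M' with hM''
      haveI hM''n : M''.Normal := by
        constructor
        intro x hx gg
        rw [Subgroup.mem_inf] at hx ⊢
        exact ⟨hMn.conj_mem x hx.1 gg, hM'n.conj_mem x hx.2 gg⟩
      haveI := hMn; haveI := hMf; haveI := hM'n; haveI := hM'f
      haveI hM''f : M''.FiniteIndex := inferInstance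
      obtain ⟨hd''0, hd''char⟩ := order_char M'' g
      set d'' := orderOf (QuotientGroup.mk g : G ⧸ M'') with hd''
      have hdd'' : d ∣ d'' := by
        have : g ^ d'' ∈ M'' := (hd''char d'').mpr dvd_rfl
        exact (hdchar d'').mp ((Subgroup.mem_inf.mp this).1)
      have hne : ¬ d'' ∣ d := by
        intro h
        have : g ^ d ∈ M'' := (hd''char d).mpr h
        exact hM'a (Subgroup.mem_inf.mp this).2
      have hlt : d < d'' := lt_of_le_of_ne (Nat.le_of_dvd hd''0 hdd'')
        (fun h => hne (h ▸ dvd_rfl))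
      have hnotmem : d'' ∉ s := fun h => hne (hsdvd d'' h)
      refine ⟨M'', d'', hM''n, hM''f, ?_, hd''0, hd''char, insert d'' s, ?_, ?_⟩
      · intro x
        rw [Subgroup.mem_inf, Subgroup.mem_inf, ← hMinv x, ← hM'inv x]
      · rw [Finset.card_insert_of_notMem hnotmem, hscard]
      · intro m hm
        rcases Finset.mem_insert.mp hm with h | h
        · exact h ▸ dvd_rfl
        · exact (hsdvd m h).trans hdd''

/-- Type synonym for the twisted conjugation action. -/
def TwAct {Q : Type*} [Group Q] (_ψ : Q ≃* Q) : Type _ := Q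

namespace TwAct
variable {Q : Type*} [Group Q] (ψ : Q ≃* Q)

/-- Identity map `Q → TwAct ψ`. -/
def ofQ : Q → TwAct ψ := id

/-- Identity map `TwAct ψ → Q`. -/
def toQ : TwAct ψ → Q := id

@[simp] lemma toQ_ofQ (x : Q) : toQ ψ (ofQ ψ x) = x := rfl
@[simp] lemma ofQ_toQ (x : TwAct ψ) : ofQ ψ (toQ ψ x) = x := rfl

instance : MulAction Q (TwAct ψ) where
  smul a x := ofQ ψ (a * toQ ψ x * (ψ a)⁻¹)
  one_smul x := by
    show ofQ ψ ((1 : Q) * toQ ψ x * (ψ 1)⁻¹) = x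
    simp only [map_one, inv_one, mul_one, one_mul, ofQ_toQ]
  mul_smul a b x := by
    show ofQ ψ ((a * b) * toQ ψ x * (ψ (a * b))⁻¹)
      = ofQ ψ (a * toQ ψ (ofQ ψ (b * toQ ψ x * (ψ b)⁻¹)) * (ψ a)⁻¹)
    simp only [toQ_ofQ, map_mul, mul_inv_rev, mul_assoc]

lemma smul_def (a : Q) (x : TwAct ψ) : a • x = ofQ ψ (a * toQ ψ x * (ψ a)⁻¹) := rfl

lemma ofQ_injective : Function.Injective (ofQ ψ) := fun _ _ h => h

end TwAct
open MulAction

section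
variable {Q : Type*} [Group Q]

-- fixedBy ≃ stabilizer for a conjugate of a ψ-fixed point (to be inserted after TwAct defs)
noncomputable def fixedByEquivStabilizer (ψ : Q ≃* Q) (a q : Q) (hq : ψ q = q)
    (y : Q) (hy : y * q * y⁻¹ = a) :
    MulAction.fixedBy (TwAct ψ) a ≃ MulAction.stabilizer (ConjAct Q) a := by
  set x₀ : Q := y * (ψ y)⁻¹ with hx₀def
  have hx₀ : a * x₀ = x₀ * ψ a := by
    subst hy
    have hψ : ψ (y * q * y⁻¹) = ψ y * q * (ψ y)⁻¹ := by
      rw [map_mul, map_mul, map_inv, hq]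
    rw [hx₀def, hψ]
    group
  refine Equiv.mk
    (fun x => ⟨ConjAct.toConjAct (TwAct.toQ ψ x.1 * x₀⁻¹), ?_⟩)
    (fun c => ⟨TwAct.ofQ ψ (ConjAct.ofConjAct c.1 * x₀), ?_⟩) ?_ ?_
  · -- membership in stabilizer
    obtain ⟨x, hx⟩ := x
    have hx' : a * TwAct.toQ ψ x = TwAct.toQ ψ x * ψ a := by
      have := hx
      rw [MulAction.mem_fixedBy] at this
      rw [TwAct.smul_def] at this
      have := congrArg (TwAct.toQ ψ) this
      rw [TwAct.toQ_ofQ] at this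
      calc a * TwAct.toQ ψ x = (a * TwAct.toQ ψ x * (ψ a)⁻¹) * ψ a := by group
        _ = TwAct.toQ ψ x * ψ a := by rw [this]
    rw [MulAction.mem_stabilizer_iff, ConjAct.smul_def, ConjAct.ofConjAct_toConjAct]
    set z := TwAct.toQ ψ x
    -- goal : (z * x₀⁻¹) * a * (z * x₀⁻¹)⁻¹ = a
    have : z * x₀⁻¹ * a = a * (z * x₀⁻¹) := by
      calc z * x₀⁻¹ * a = z * (x₀⁻¹ * a * x₀) * x₀⁻¹ := by group
        _ = z * ψ a * x₀⁻¹ := by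
            rw [show x₀⁻¹ * a * x₀ = ψ a from by
              rw [show x₀⁻¹ * a * x₀ = x₀⁻¹ * (a * x₀) from by group, hx₀]
              group]
        _ = a * z * x₀⁻¹ := congrArg (· * x₀⁻¹) hx'.symm
        _ = a * (z * x₀⁻¹) := by group
    rw [this]; group
  · -- membership in fixedBy
    obtain ⟨c, hc⟩ := c
    rw [MulAction.mem_stabilizer_iff, ConjAct.smul_def] at hc
    set z := ConjAct.ofConjAct c
    have hz : z * a = a * z := by
      calc z * a = (z * a * z⁻¹) * z := by group
        _ = a * z := by rw [hc]
    rw [MulAction.mem_fixedBy, TwAct.smul_def, TwAct.toQ_ofQ]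
    apply TwAct.ofQ_injective ψ (Q := Q)
    show TwAct.ofQ ψ (a * (z * x₀) * (ψ a)⁻¹) = TwAct.ofQ ψ (z * x₀)
    congr 1
    calc a * (z * x₀) * (ψ a)⁻¹ = z * (a * x₀) * (ψ a)⁻¹ := by rw [← mul_assoc, ← hz]; group
      _ = z * (x₀ * ψ a) * (ψ a)⁻¹ := by rw [hx₀]
      _ = z * x₀ := by group
  · intro x
    apply Subtype.ext
    show TwAct.ofQ ψ (ConjAct.ofConjAct (ConjAct.toConjAct (TwAct.toQ ψ x.1 * x₀⁻¹)) * x₀) = x.1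
    rw [ConjAct.ofConjAct_toConjAct]
    show TwAct.ofQ ψ (TwAct.toQ ψ x.1 * x₀⁻¹ * x₀) = x.1
    rw [inv_mul_cancel_right]
    exact TwAct.ofQ_toQ ψ x.1
  · intro c
    apply Subtype.ext
    show ConjAct.toConjAct (TwAct.toQ ψ (TwAct.ofQ ψ (ConjAct.ofConjAct c.1 * x₀)) * x₀⁻¹) = c.1
    rw [TwAct.toQ_ofQ, mul_inv_cancel_right]
    exact ConjAct.toConjAct_ofConjAct c.1
end

lemma card_twisted_ge {Q : Type*} [Group Q] [Finite Q] (ψ : Q ≃* Q) (q : Q) (hq : ψ q = q)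
    (s : Finset ℕ) (hs : ∀ m ∈ s, m ∣ orderOf q) :
    s.card ≤ Nat.card (Quotient (twistedConjSetoid ψ)) := by
  classical
  haveI : Fintype Q := Fintype.ofFinite Q
  haveI : Finite (TwAct ψ) := inferInstanceAs (Finite Q)
  haveI : Fintype (TwAct ψ) := Fintype.ofFinite _
  haveI : ∀ a : Q, Fintype (MulAction.fixedBy (TwAct ψ) a) := fun a => Fintype.ofFinite _
  haveI : Fintype (MulAction.orbitRel.Quotient Q (TwAct ψ)) := Fintype.ofFinite _
  have hn : 0 < orderOf q := orderOf_pos q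
  set n := orderOf q with hndef
  set qm : ℕ → Q := fun m => q ^ (n / m) with hqm
  have horder : ∀ m ∈ s, orderOf (qm m) = m := by
    intro m hm
    have hdvd := hs m hm
    rw [hqm]
    simp only
    rw [orderOf_pow q, ← hndef, Nat.gcd_eq_right (Nat.div_dvd_of_dvd hdvd),
      Nat.div_div_self hdvd hn.ne']
  have hψqm : ∀ m : ℕ, ψ (qm m) = qm m := by
    intro m
    rw [hqm]
    simp only [map_pow, hq]
  -- Burnside
  have burnside := MulAction.sum_card_fixedBy_eq_card_orbits_mul_card_group Q (TwAct ψ)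
  -- lower bound for the sum
  set F : Q → ℕ := fun a => Fintype.card (MulAction.fixedBy (TwAct ψ) a) with hF
  set O : ℕ → Finset Q := fun m =>
    Finset.univ.filter (fun a => a ∈ MulAction.orbit (ConjAct Q) (qm m)) with hO
  have hdisj : ∀ m₁ ∈ s, ∀ m₂ ∈ s, m₁ ≠ m₂ → Disjoint (O m₁) (O m₂) := by
    intro m₁ h₁ m₂ h₂ hne
    rw [Finset.disjoint_left]
    intro a ha₁ ha₂
    apply hne
    have key : ∀ m ∈ s, a ∈ O m → orderOf a = m := by
      intro m hm ham
      rw [hO] at ham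
      simp only [Finset.mem_filter, Finset.mem_univ, true_and] at ham
      obtain ⟨c, hc⟩ := ham
      have hc2 : ConjAct.ofConjAct c * qm m * (ConjAct.ofConjAct c)⁻¹ = a := by
        rw [← ConjAct.smul_def]; exact hc
      have hsc : SemiconjBy (ConjAct.ofConjAct c) (qm m) a := by
        rw [SemiconjBy]
        rw [← hc2]; group
      rw [← hsc.orderOf_eq (ConjAct.ofConjAct c), horder m hm]
    rw [← key m₁ h₁ ha₁, key m₂ h₂ ha₂]
  have hinner : ∀ m ∈ s, ∑ a ∈ O m, F a = Fintype.card Q := by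
    intro m hm
    haveI : ∀ a : Q, Fintype (MulAction.stabilizer (ConjAct Q) a) := fun a => Fintype.ofFinite _
    have hstab : ∀ a ∈ O m, F a = Fintype.card (MulAction.stabilizer (ConjAct Q) (qm m)) := by
      intro a ha
      rw [hO] at ha
      simp only [Finset.mem_filter, Finset.mem_univ, true_and] at ha
      obtain ⟨c, hc⟩ := ha
      have hc2 : ConjAct.ofConjAct c * qm m * (ConjAct.ofConjAct c)⁻¹ = a := by
        rw [← ConjAct.smul_def]; exact hc
      have e1 := fixedByEquivStabilizer ψ a (qm m) (hψqm m) (ConjAct.ofConjAct c) hc2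
      have horb : (MulAction.orbitRel (ConjAct Q) Q) a (qm m) := ⟨c, hc⟩
      have e2 := MulAction.stabilizerEquivStabilizerOfOrbitRel horb
      rw [hF]
      simp only
      rw [Fintype.card_congr e1, Fintype.card_congr e2.toEquiv]
    rw [Finset.sum_congr rfl hstab, Finset.sum_const, smul_eq_mul]
    have hOcard : (O m).card = Fintype.card (MulAction.orbit (ConjAct Q) (qm m)) := by
      rw [hO]
      simp only
      rw [Fintype.card_subtype]
    rw [hOcard]
    have := MulAction.card_orbit_mul_card_stabilizer_eq_card_group (ConjAct Q) (qm m)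
    rw [this]
    exact Fintype.card_congr (ConjAct.ofConjAct (G := Q)).toEquiv
  have hsum_lower : s.card * Fintype.card Q ≤ ∑ a : Q, F a := by
    have hsub : (s.biUnion O) ⊆ Finset.univ := Finset.subset_univ _
    have h1 : ∑ a ∈ s.biUnion O, F a ≤ ∑ a : Q, F a :=
      Finset.sum_le_sum_of_subset hsub
    have h2 : ∑ a ∈ s.biUnion O, F a = ∑ m ∈ s, ∑ a ∈ O m, F a :=
      Finset.sum_biUnion hdisj
    rw [h2] at h1
    rw [Finset.sum_congr rfl hinner, Finset.sum_const, smul_eq_mul] at h1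
    exact h1
  rw [burnside] at hsum_lower
  have hQpos : 0 < Fintype.card Q := Fintype.card_pos
  have hcard_le : s.card ≤ Fintype.card (MulAction.orbitRel.Quotient Q (TwAct ψ)) :=
    Nat.le_of_mul_le_mul_right hsum_lower hQpos
  -- identify the two quotients
  set eq0 : Q ≃ TwAct ψ := Equiv.mk (TwAct.ofQ ψ) (TwAct.toQ ψ) (fun _ => rfl) (fun _ => rfl)
    with heq0
  have hrel : ∀ a b : Q, (twistedConjSetoid ψ) a b ↔
      (MulAction.orbitRel Q (TwAct ψ)) (eq0 a) (eq0 b) := by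
    intro a b
    simp only [heq0, Equiv.coe_fn_mk]
    constructor
    · rintro ⟨x, rfl⟩
      refine ⟨x⁻¹, ?_⟩
      show x⁻¹ • TwAct.ofQ ψ (x * a * (ψ x)⁻¹) = TwAct.ofQ ψ a
      rw [TwAct.smul_def]
      apply TwAct.ofQ_injective ψ (Q := Q)
      show TwAct.ofQ ψ (TwAct.ofQ ψ (x⁻¹ * TwAct.toQ ψ (TwAct.ofQ ψ (x * a * (ψ x)⁻¹)) * (ψ x⁻¹)⁻¹))
        = TwAct.ofQ ψ (TwAct.ofQ ψ a)
      rw [TwAct.toQ_ofQ, map_inv]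
      congr 1
      congr 1
      group
    · rintro ⟨x, hx⟩
      have hx' : x • TwAct.ofQ ψ b = TwAct.ofQ ψ a := hx
      rw [TwAct.smul_def] at hx'
      have hx2 : x * b * (ψ x)⁻¹ = a := by
        have := congrArg (TwAct.toQ ψ) hx'
        rw [TwAct.toQ_ofQ, TwAct.toQ_ofQ] at this
        exact this
      exact (twistedConjSetoid ψ).iseqv.symm ⟨x, hx2.symm⟩
  have e : Quotient (twistedConjSetoid ψ) ≃ MulAction.orbitRel.Quotient Q (TwAct ψ) :=
    Quotient.congr eq0 hrel
  rw [Nat.card_congr e, Nat.card_eq_fintype_card]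
  exact hcard_le


/-- If `G` is torsion-free, finitely generated, residually finite and `φ` has a
nontrivial fixed point, then `R(φ) = ∞`. -/
theorem stmt_14 {G : Type*} [Group G] [Group.FG G]
    (hrf : IsResiduallyFinite G) (htf : ∀ g : G, g ≠ 1 → ¬IsOfFinOrder g)
    (φ : G ≃* G) (g : G) (hg : g ≠ 1) (hfix : φ g = g) :
    Infinite (Quotient (twistedConjSetoid φ)) := by
  classical
  by_contra hinf
  haveI hfin : Finite (Quotient (twistedConjSetoid φ)) := not_infinite_iff_finite.mp hinf
  set c := Nat.card (Quotient (twistedConjSetoid φ)) with hc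
  obtain ⟨M, d, hMn, hMf, hMinv, hd0, hdchar, s, hscard, hsdvd⟩ :=
    exists_chain hrf htf φ g hg c
  haveI := hMn
  haveI := hMf
  -- the induced automorphism of the finite quotient
  have hmap : M.map (φ : G →* G) = M := by
    ext x
    simp only [Subgroup.mem_map]
    constructor
    · rintro ⟨y, hy, rfl⟩
      exact (hMinv y).mp hy
    · intro hx
      exact ⟨φ.symm x, by rw [hMinv (φ.symm x)]; simpa using hx, by simp⟩
  set ψ : G ⧸ M ≃* G ⧸ M := QuotientGroup.congr M M φ hmap with hψ
  have hψmk : ∀ x : G, ψ (QuotientGroup.mk x) = QuotientGroup.mk (φ x) := by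
    intro x
    rw [hψ]
    exact QuotientGroup.congr_mk M M φ hmap x
  have hψq : ψ (QuotientGroup.mk g) = QuotientGroup.mk g := by
    rw [hψmk, hfix]
  -- the order of g in the quotient is d
  have horder : orderOf (QuotientGroup.mk g : G ⧸ M) = d := by
    obtain ⟨hpos, hchar⟩ := order_char M g
    apply Nat.dvd_antisymm
    · exact (hchar d).mp ((hdchar d).mpr dvd_rfl)
    · exact (hdchar _).mp ((hchar _).mpr dvd_rfl)
  -- lower bound from the finite quotient
  have hlow : s.card ≤ Nat.card (Quotient (twistedConjSetoid ψ)) :=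
    card_twisted_ge ψ (QuotientGroup.mk g) hψq s (fun m hm => horder ▸ hsdvd m hm)
  -- surjection of class sets
  have hsurj : ∃ f : Quotient (twistedConjSetoid φ) → Quotient (twistedConjSetoid ψ),
      Function.Surjective f := by
    refine ⟨Quotient.map (QuotientGroup.mk : G → G ⧸ M) ?_, ?_⟩
    · rintro a b ⟨x, rfl⟩
      refine ⟨QuotientGroup.mk x, ?_⟩
      rw [hψmk]
      rw [← QuotientGroup.mk_inv, ← QuotientGroup.mk_mul, ← QuotientGroup.mk_mul]
    · intro y
      obtain ⟨z, rfl⟩ := Quotient.exists_rep y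
      obtain ⟨x, rfl⟩ := QuotientGroup.mk_surjective z
      exact ⟨Quotient.mk _ x, rfl⟩
  obtain ⟨f, hf⟩ := hsurj
  have hup : Nat.card (Quotient (twistedConjSetoid ψ)) ≤ c :=
    Nat.card_le_card_of_surjective f hf
  omega
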